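/- Let Φ be the flow of an algebraic gradient V on a based chain complex. Then there exists a natural number r such that Φ^s = Φ^r for all s ≥ r, i.e., the sequence of iterated flows stabilizes. -/

import Mathlib

open Classical Finset

noncomputable section

variable {𝕜 : Type} [Field 𝕜] {l : ℕ}

/-- The support of a coordinate vector: the set of basis indices with nonzero coefficient. -/
def vsupp (c : Fin l → 𝕜) : Finset (Fin l) :=
  Finset.univ.filter (fun i => c i ≠ 0)

/-- The pivot of a coordinate vector: the maximal index of its support (`⊥` if zero). -/
def vpivot (c : Fin l → 𝕜) : WithBot (Fin l) := (vsupp c).max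

/-- The lexicographic order on finite subsets of a totally ordered set. -/
def finsetLexLe {α : Type*} [LinearOrder α] (A B : Finset α) : Prop :=
  A = B ∨ ∃ h : ((A \ B) ∪ (B \ A)).Nonempty, ((A \ B) ∪ (B \ A)).max' h ∈ B

/-- The lexicographic preorder on chains, comparing supports lexicographically. -/
def chainLexLe (c₁ c₂ : Fin l → 𝕜) : Prop := finsetLexLe (vsupp c₁) (vsupp c₂)

/-- The strict lexicographic preorder on chains. -/
def chainLexLt (c₁ c₂ : Fin l → 𝕜) : Prop :=
  chainLexLe c₁ c₂ ∧ vsupp c₁ ≠ vsupp c₂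

/-- A basis element is critical if it is contained in no pair of `V`. -/
def CriticalIn {l : ℕ} (V : Finset (Fin l × Fin l)) (a : Fin l) : Prop :=
  ∀ p ∈ V, p.1 ≠ a ∧ p.2 ≠ a

/-- A based chain complex with an elementwise filtration: the basis elements are
`σ_1 < … < σ_l` (indexed by `Fin l`), `deg` records their homological degree, and `D` is the
filtration boundary matrix (the column `D _ j` represents `∂σ_j`).  Monotonicity `filt`
expresses that the down sets of the filtration order span subcomplexes, `homog` that the
boundary map decreases degree by one, and `dd` that `∂ ∘ ∂ = 0`. -/
structure BasedChainComplex (𝕜 : Type) [Field 𝕜] (l : ℕ) where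
  deg : Fin l → ℕ
  D : Matrix (Fin l) (Fin l) 𝕜
  homog : ∀ i j, D i j ≠ 0 → deg i + 1 = deg j
  filt : ∀ i j, D i j ≠ 0 → i < j
  dd : D * D = 0

namespace BasedChainComplex

variable (C : BasedChainComplex 𝕜 l)

/-- `σ_i` is a facet of `σ_j` if `⟨∂σ_j, σ_i⟩ ≠ 0`. -/
def IsFacet (i j : Fin l) : Prop := C.D i j ≠ 0

/-- An algebraic gradient: a disjoint collection `V` of facet pairs arising from an
algebraic Morse function, i.e. a monotonic function `f` on the basis such that a facet
pair `(μ, η)` satisfies `f μ = f η` iff `(μ, η) ∈ V`. -/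
def IsAlgGradient (V : Finset (Fin l × Fin l)) : Prop :=
  (∀ p ∈ V, C.IsFacet p.1 p.2) ∧
  (∀ p ∈ V, ∀ q ∈ V, p ≠ q → p.1 ≠ q.1 ∧ p.1 ≠ q.2 ∧ p.2 ≠ q.1 ∧ p.2 ≠ q.2) ∧
  (∃ f : Fin l → ℝ, (∀ i j, C.IsFacet i j → f i ≤ f j) ∧
    (∀ i j, C.IsFacet i j → (f i = f j ↔ (i, j) ∈ V)))

/-- The chain homotopy `F` of an algebraic gradient `V`: the linear map with
`F σ = −⟨∂τ, σ⟩⁻¹ · τ` if `(σ, τ) ∈ V` and `F σ = 0` otherwise. -/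
def Fmap (V : Finset (Fin l × Fin l)) (c : Fin l → 𝕜) : Fin l → 𝕜 :=
  fun j => ∑ i, (if (i, j) ∈ V then -(C.D i j)⁻¹ else 0) * c i

/-- The flow of an algebraic gradient `V`: `Φ(c) = c + ∂F(c) + F(∂c)`. -/
def flow (V : Finset (Fin l × Fin l)) (c : Fin l → 𝕜) : Fin l → 𝕜 :=
  c + C.D.mulVec (C.Fmap V c) + C.Fmap V (C.D.mulVec c)

/-- A cycle of degree `n`: a chain with `∂z = 0` supported in degree `n`. -/
def IsCycle (n : ℕ) (z : Fin l → 𝕜) : Prop :=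
  C.D.mulVec z = 0 ∧ ∀ i, z i ≠ 0 → C.deg i = n

/-- `V` is `n`-reduced: for every pair `(a, b) ∈ V` with `a` of degree `n`,
the pivot of `∂b` equals `a`. -/
def NReduced (V : Finset (Fin l × Fin l)) (n : ℕ) : Prop :=
  ∀ p ∈ V, C.deg p.1 = n → vpivot (fun i => C.D i p.2) = (p.1 : WithBot (Fin l))

/-- `V` generates the `n`-boundaries: the gradient cofacet boundaries
`{∂b : (a,b) ∈ V, deg a = n}` span the space of boundaries of degree `n`. -/
def GeneratesBoundaries (V : Finset (Fin l × Fin l)) (n : ℕ) : Prop :=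
  ∀ e : Fin l → 𝕜, (∀ i, e i ≠ 0 → C.deg i = n + 1) →
    C.D.mulVec e ∈ Submodule.span 𝕜
      {x : Fin l → 𝕜 | ∃ p ∈ V, C.deg p.1 = n ∧ x = fun i => C.D i p.2}

/-- A chain is lexicographically minimal if no homologous chain is strictly smaller
in the lexicographic preorder. -/
def LexMinimal (z : Fin l → 𝕜) : Prop :=
  ∀ e : Fin l → 𝕜, ¬ chainLexLt (z + C.D.mulVec e) z

end BasedChainComplex

end

section StabAux

open Matrix Finset

variable {𝕜 : Type} [Field 𝕜] {l : ℕ}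

namespace StabAux

variable (C : BasedChainComplex 𝕜 l) (V : Finset (Fin l × Fin l))

/-- The matrix of the chain homotopy `F`. -/
noncomputable def Fm : Matrix (Fin l) (Fin l) 𝕜 :=
  fun j i => if (i, j) ∈ V then -(C.D i j)⁻¹ else 0

lemma Fmap_eq (c : Fin l → 𝕜) : C.Fmap V c = (Fm C V).mulVec c := by
  funext j
  simp [BasedChainComplex.Fmap, Fm, Matrix.mulVec, dotProduct]

/-- The matrix of the flow. -/
noncomputable def Mfl : Matrix (Fin l) (Fin l) 𝕜 := 1 + C.D * Fm C V + Fm C V * C.D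

lemma flow_eq (c : Fin l → 𝕜) : C.flow V c = (Mfl C V).mulVec c := by
  unfold BasedChainComplex.flow Mfl
  rw [Fmap_eq, Fmap_eq, Matrix.add_mulVec, Matrix.add_mulVec, Matrix.one_mulVec,
    Matrix.mulVec_mulVec, Matrix.mulVec_mulVec]

lemma iterate_flow_eq (s : ℕ) (c : Fin l → 𝕜) :
    (C.flow V)^[s] c = ((Mfl C V) ^ s).mulVec c := by
  induction s generalizing c with
  | zero => simp [Matrix.one_mulVec]
  | succ n ih =>
    rw [Function.iterate_succ_apply, flow_eq, ih, Matrix.mulVec_mulVec, ← pow_succ]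

def IsHead (j : Fin l) : Prop := ∃ i, (i, j) ∈ V
def IsTail (j : Fin l) : Prop := ∃ k, (j, k) ∈ V

variable {C V}
variable (hfac : ∀ p ∈ V, C.IsFacet p.1 p.2)
  (hdisj : ∀ p ∈ V, ∀ q ∈ V, p ≠ q → p.1 ≠ q.1 ∧ p.1 ≠ q.2 ∧ p.2 ≠ q.1 ∧ p.2 ≠ q.2)
  {f : Fin l → ℝ} (hmono : ∀ i j, C.IsFacet i j → f i ≤ f j)
  (hiff : ∀ i j, C.IsFacet i j → (f i = f j ↔ (i, j) ∈ V))

include hfac in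
lemma fst_lt_snd {i j : Fin l} (h : (i, j) ∈ V) : i < j :=
  C.filt i j (hfac (i, j) h)

include hfac hdisj in
lemma head_not_tail {i j k : Fin l} (h1 : (i, j) ∈ V) (h2 : (j, k) ∈ V) : False := by
  have hne : (i, j) ≠ (j, k) := by
    intro he
    have hij : i = j := congrArg Prod.fst he
    have hlt := fst_lt_snd hfac h1
    rw [hij] at hlt
    exact lt_irrefl _ hlt
  exact (hdisj _ h1 _ h2 hne).2.2.1 rfl

include hdisj in
lemma tail_unique {i i' j : Fin l} (h1 : (i, j) ∈ V) (h2 : (i', j) ∈ V) : i = i' := by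
  by_contra hne
  exact (hdisj _ h1 _ h2 (by simp [Prod.ext_iff, hne])).2.2.2 rfl

include hdisj in
lemma head_unique {i j j' : Fin l} (h1 : (i, j) ∈ V) (h2 : (i, j') ∈ V) : j = j' := by
  by_contra hne
  exact (hdisj _ h1 _ h2 (by simp [Prod.ext_iff, hne])).1 rfl

include hdisj in
lemma DFm_of_tail {j τ : Fin l} (hτ : (j, τ) ∈ V) (i : Fin l) :
    (C.D * Fm C V) i j = -(C.D j τ)⁻¹ * C.D i τ := by
  rw [Matrix.mul_apply]
  rw [Finset.sum_eq_single τ]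
  · rw [Fm, if_pos hτ]; ring
  · intro k _ hk
    have : (j, k) ∉ V := fun hm => hk (head_unique hdisj hm hτ)
    simp [Fm, this]
  · simp

lemma DFm_of_not_tail {j : Fin l} (h : ¬ IsTail V j) (i : Fin l) :
    (C.D * Fm C V) i j = 0 := by
  rw [Matrix.mul_apply]
  apply Finset.sum_eq_zero
  intro k _
  have : (j, k) ∉ V := fun hm => h ⟨k, hm⟩
  simp [Fm, this]

include hdisj in
lemma FmD_of_head {μ i : Fin l} (hμ : (μ, i) ∈ V) (j : Fin l) :
    (Fm C V * C.D) i j = -(C.D μ i)⁻¹ * C.D μ j := by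
  rw [Matrix.mul_apply]
  rw [Finset.sum_eq_single μ]
  · rw [Fm, if_pos hμ]
  · intro k _ hk
    have : (k, i) ∉ V := fun hm => hk (tail_unique hdisj hm hμ)
    simp [Fm, this]
  · simp

lemma FmD_of_not_head {i : Fin l} (h : ¬ IsHead V i) (j : Fin l) :
    (Fm C V * C.D) i j = 0 := by
  rw [Matrix.mul_apply]
  apply Finset.sum_eq_zero
  intro k _
  have : (k, i) ∉ V := fun hm => h ⟨k, hm⟩
  simp [Fm, this]

include hfac hdisj in
lemma Mfl_diag_tail {j τ : Fin l} (hτ : (j, τ) ∈ V) : Mfl C V j j = 0 := by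
  have hD : C.D j τ ≠ 0 := hfac _ hτ
  have h1 : (C.D * Fm C V) j j = -1 := by
    rw [DFm_of_tail hdisj hτ]
    field_simp
  have h2 : (Fm C V * C.D) j j = 0 :=
    FmD_of_not_head (fun ⟨k, hk⟩ => head_not_tail hfac hdisj hk hτ) j
  simp [Mfl, h1, h2, Matrix.one_apply_eq]

include hfac hdisj in
lemma Mfl_diag_head {μ j : Fin l} (hμ : (μ, j) ∈ V) : Mfl C V j j = 0 := by
  have hD : C.D μ j ≠ 0 := hfac _ hμ
  have h1 : (C.D * Fm C V) j j = 0 :=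
    DFm_of_not_tail (fun ⟨k, hk⟩ => head_not_tail hfac hdisj hμ hk) j
  have h2 : (Fm C V * C.D) j j = -1 := by
    rw [FmD_of_head hdisj hμ]
    field_simp
  simp [Mfl, h1, h2, Matrix.one_apply_eq]

lemma Mfl_diag_crit {j : Fin l} (h1 : ¬ IsHead V j) (h2 : ¬ IsTail V j) :
    Mfl C V j j = 1 := by
  simp [Mfl, DFm_of_not_tail h2, FmD_of_not_head h1, Matrix.one_apply_eq]

include hfac hdisj hmono hiff in
lemma f_lt_of_offdiag {i j : Fin l} (hne : i ≠ j) (h : Mfl C V i j ≠ 0) : f i < f j := by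
  have hone : (1 : Matrix (Fin l) (Fin l) 𝕜) i j = 0 := Matrix.one_apply_ne hne
  have h' : (C.D * Fm C V) i j ≠ 0 ∨ (Fm C V * C.D) i j ≠ 0 := by
    by_contra hc
    push_neg at hc
    exact h (by simp [Mfl, hone, hc.1, hc.2])
  rcases h' with hA | hB
  · -- j must be a tail
    by_cases ht : IsTail V j
    · obtain ⟨τ, hτ⟩ := ht
      rw [DFm_of_tail hdisj hτ] at hA
      have hDiτ : C.D i τ ≠ 0 := fun h0 => hA (by rw [h0]; ring)
      have hfij : f i ≤ f τ := hmono i τ hDiτ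
      have hfj : f j = f τ := (hiff j τ (hfac _ hτ)).mpr hτ
      rcases lt_or_eq_of_le hfij with hlt | heq
      · rw [hfj]; exact hlt
      · exact absurd (tail_unique hdisj ((hiff i τ hDiτ).mp heq) hτ) hne
    · exact absurd (DFm_of_not_tail ht i) hA
  · by_cases hh : IsHead V i
    · obtain ⟨μ, hμ⟩ := hh
      rw [FmD_of_head hdisj hμ] at hB
      have hDμj : C.D μ j ≠ 0 := fun h0 => hB (by rw [h0]; ring)
      have hfμ : f μ ≤ f j := hmono μ j hDμj
      have hfi : f μ = f i := (hiff μ i (hfac _ hμ)).mpr hμ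
      rcases lt_or_eq_of_le hfμ with hlt | heq
      · rw [← hfi]; exact hlt
      · exact absurd (head_unique hdisj ((hiff μ j hDμj).mp heq) hμ).symm hne
    · exact absurd (FmD_of_not_head hh j) hB

include hfac hdisj hmono hiff in
lemma head_of_offdiag {i j : Fin l} (hne : i ≠ j) (hnt : ¬ IsTail V j)
    (h : Mfl C V i j ≠ 0) : IsHead V i ∧ f i < f j := by
  refine ⟨?_, f_lt_of_offdiag hfac hdisj hmono hiff hne h⟩
  by_contra hh
  have hone : (1 : Matrix (Fin l) (Fin l) 𝕜) i j = 0 := Matrix.one_apply_ne hne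
  exact h (by simp [Mfl, hone, DFm_of_not_tail hnt, FmD_of_not_head hh])

/-- The rank of a basis element with respect to the Morse function. -/
noncomputable def rk (f : Fin l → ℝ) (j : Fin l) : ℕ :=
  (Finset.univ.filter (fun k => f k < f j)).card

lemma rk_lt_rk {f : Fin l → ℝ} {i j : Fin l} (h : f i < f j) : rk f i < rk f j := by
  apply Finset.card_lt_card
  constructor
  · intro k hk
    simp only [Finset.mem_filter, Finset.mem_univ, true_and] at hk ⊢
    exact hk.trans h
  · intro hsub
    have := hsub (Finset.mem_filter.mpr ⟨Finset.mem_univ i, h⟩)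
    simp only [Finset.mem_filter] at this
    exact absurd this.2 (lt_irrefl _)

lemma rk_le (f : Fin l → ℝ) (j : Fin l) : rk f j ≤ l := by
  have := Finset.card_filter_le (Finset.univ : Finset (Fin l)) (fun k => f k < f j)
  simpa [rk] using this

include hfac hdisj hmono hiff in
lemma head_pow : ∀ n : ℕ, ∀ j : Fin l, IsHead V j → ∀ i : Fin l,
    ((Mfl C V) ^ (n + 1)) i j ≠ 0 → IsHead V i ∧ rk f i + (n + 1) ≤ rk f j := by
  intro n
  induction n with
  | zero =>
    intro j hj i h
    rw [pow_one] at h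
    rcases eq_or_ne i j with rfl | hne
    · obtain ⟨μ, hμ⟩ := hj
      exact absurd (Mfl_diag_head hfac hdisj hμ) h
    · have hnt : ¬ IsTail V j := fun ⟨k, hk⟩ => head_not_tail hfac hdisj hj.choose_spec hk
      obtain ⟨hh, hf⟩ := head_of_offdiag hfac hdisj hmono hiff hne hnt h
      exact ⟨hh, Nat.succ_le_of_lt (by simpa using rk_lt_rk hf)⟩
  | succ n ih =>
    intro j hj i h
    rw [pow_succ', Matrix.mul_apply] at h
    obtain ⟨k, _, hk⟩ := Finset.exists_ne_zero_of_sum_ne_zero h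
    have h1 : Mfl C V i k ≠ 0 := fun h0 => hk (by rw [h0, zero_mul])
    have h2 : ((Mfl C V) ^ (n + 1)) k j ≠ 0 := fun h0 => hk (by rw [h0, mul_zero])
    obtain ⟨hkh, hkr⟩ := ih j hj k h2
    rcases eq_or_ne i k with rfl | hne
    · obtain ⟨μ, hμ⟩ := hkh
      exact absurd (Mfl_diag_head hfac hdisj hμ) h1
    · have hnt : ¬ IsTail V k := fun ⟨m, hm⟩ => head_not_tail hfac hdisj hkh.choose_spec hm
      obtain ⟨hh, hf⟩ := head_of_offdiag hfac hdisj hmono hiff hne hnt h1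
      exact ⟨hh, by have := rk_lt_rk hf; omega⟩

include hfac hdisj hmono hiff in
lemma head_pow_zero {j : Fin l} (hj : IsHead V j) {s : ℕ} (hs : rk f j + 1 ≤ s)
    (i : Fin l) : ((Mfl C V) ^ s) i j = 0 := by
  obtain ⟨n, rfl⟩ : ∃ n, s = n + 1 := ⟨s - 1, by omega⟩
  by_contra h
  obtain ⟨_, hr⟩ := head_pow hfac hdisj hmono hiff n j hj i h
  omega

include hfac hdisj hmono hiff in
lemma crit_step {j : Fin l} (h1 : ¬ IsHead V j) (h2 : ¬ IsTail V j) {s : ℕ}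
    (hs : rk f j ≤ s) (i : Fin l) :
    ((Mfl C V) ^ (s + 1)) i j = ((Mfl C V) ^ s) i j := by
  rw [pow_succ, Matrix.mul_apply]
  rw [Finset.sum_eq_single j]
  · rw [Mfl_diag_crit h1 h2, mul_one]
  · intro k _ hk
    by_cases hm : Mfl C V k j = 0
    · rw [hm, mul_zero]
    · have hf : f k < f j := f_lt_of_offdiag hfac hdisj hmono hiff hk hm
      have hkh : IsHead V k ∧ _ := head_of_offdiag hfac hdisj hmono hiff hk h2 hm
      have : ((Mfl C V) ^ s) i k = 0 := by
        apply head_pow_zero hfac hdisj hmono hiff hkh.1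
        have := rk_lt_rk hf; omega
      rw [this, zero_mul]
  · simp

/-- Column `j` of the powers stabilizes at exponent `rk f j + 1`. -/
def Pcol (C : BasedChainComplex 𝕜 l) (V : Finset (Fin l × Fin l)) (f : Fin l → ℝ)
    (j : Fin l) : Prop :=
  ∀ s, rk f j + 1 ≤ s → ∀ i, ((Mfl C V) ^ s) i j = ((Mfl C V) ^ (rk f j + 1)) i j

include hfac hdisj hmono hiff in
lemma stab_step {j : Fin l} (IH : ∀ k, rk f k < rk f j → Pcol C V f k) {s : ℕ}
    (hs : rk f j + 1 ≤ s) (i : Fin l) :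
    ((Mfl C V) ^ (s + 1)) i j = ((Mfl C V) ^ s) i j := by
  by_cases hh : IsHead V j
  · rw [head_pow_zero hfac hdisj hmono hiff hh (by omega) i,
      head_pow_zero hfac hdisj hmono hiff hh hs i]
  · by_cases ht : IsTail V j
    · -- tail case
      obtain ⟨m, rfl⟩ : ∃ m, s = m + 1 := ⟨s - 1, by omega⟩
      rw [pow_succ, Matrix.mul_apply]
      conv_rhs => rw [pow_succ, Matrix.mul_apply]
      apply Finset.sum_congr rfl
      intro k _
      by_cases hm : Mfl C V k j = 0
      · rw [hm, mul_zero, mul_zero]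
      · rcases eq_or_ne k j with rfl | hne
        · obtain ⟨τ, hτ⟩ := ht
          exact absurd (Mfl_diag_tail hfac hdisj hτ) hm
        · have hf : f k < f j := f_lt_of_offdiag hfac hdisj hmono hiff hne hm
          have hrk : rk f k < rk f j := rk_lt_rk hf
          have e1 : ((Mfl C V) ^ (m + 1)) i k = ((Mfl C V) ^ (rk f k + 1)) i k :=
            IH k hrk (m + 1) (by omega) i
          have e2 : ((Mfl C V) ^ m) i k = ((Mfl C V) ^ (rk f k + 1)) i k :=
            IH k hrk m (by omega) i
          rw [e1, e2]
    · exact crit_step hfac hdisj hmono hiff hh ht (by omega) i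

include hfac hdisj hmono hiff in
lemma stab_col : ∀ j : Fin l, Pcol C V f j := by
  have main : ∀ n : ℕ, ∀ j : Fin l, rk f j < n → Pcol C V f j := by
    intro n
    induction n with
    | zero => intro j hj; omega
    | succ n ih =>
      intro j hj
      intro s hs i
      induction s, hs using Nat.le_induction with
      | base => rfl
      | succ s hs ihs =>
        rw [← ihs]
        apply stab_step hfac hdisj hmono hiff (fun k hk => ih k (by omega)) hs
  intro j
  exact main (rk f j + 1) j (by omega)

end StabAux

end StabAux

/-- The iterated flows of an algebraic gradient on a based chain complex stabilize:
there is an `r` such that `Φ^s = Φ^r` for all `s ≥ r`. -/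
theorem stmt6 {𝕜 : Type} [Field 𝕜] {l : ℕ} (C : BasedChainComplex 𝕜 l)
    (V : Finset (Fin l × Fin l)) (hV : C.IsAlgGradient V) :
    ∃ r : ℕ, ∀ s : ℕ, r ≤ s → (C.flow V)^[s] = (C.flow V)^[r] := by
  obtain ⟨hfac, hdisj, f, hmono, hiff⟩ := hV
  refine ⟨l + 1, fun s hs => ?_⟩
  have hM : (StabAux.Mfl C V) ^ s = (StabAux.Mfl C V) ^ (l + 1) := by
    ext i j
    have hj := StabAux.stab_col hfac hdisj hmono hiff j
    rw [hj s (by have := StabAux.rk_le f j; omega) i,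
        hj (l + 1) (by have := StabAux.rk_le f j; omega) i]
  funext c
  rw [StabAux.iterate_flow_eq, StabAux.iterate_flow_eq, hM]
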